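/- Let n ≥ 1 and let 𝔄ₙ be the group of invertible elements of the monoid ℤ^V (V = {1, …, n}) with the twisted multiplication determined by the cyclic permutation τ(k) = k − 1 mod n. Then 𝔄ₙ is isomorphic to the semidirect product ℤⁿ ⋊ Sₙ, where the symmetric group Sₙ acts on ℤⁿ by permuting coordinates. -/

import Mathlib

/-- `TwFun n` is the set of maps `{1, …, n} → ℤ` (i.e. the lattice `ℤⁿ`),
to be equipped with the twisted multiplication coming from the right `ℤ`-action
on `Fin n` determined by the cyclic permutation `τ = (finRotate n).symm`
(`τ(k) = k - 1 mod n`). -/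
def TwFun (n : ℕ) := Fin n → ℤ

theorem TwFun.key {V : Type*} (τ : Equiv.Perm V) (x y : ℤ) (v : V) :
    (τ ^ (x + y)) v = (τ ^ y) ((τ ^ x) v) := by
  rw [add_comm, zpow_add, Equiv.Perm.mul_apply]

/-- The twisted multiplication `(φ₂ * φ₁)(v) = φ₂(v) + φ₁(v · φ₂(v))`, where
`v · m = τ^m(v)` with `τ(k) = k - 1 mod n`, makes `ℤ^V` a monoid. -/
instance TwFun.instMonoid (n : ℕ) : Monoid (TwFun n) where
  mul a b := fun v => a v + b (((finRotate n).symm ^ (a v)) v)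
  one := fun _ => 0
  mul_assoc a b c := by
    funext v
    show (a v + b _) + c (((finRotate n).symm ^ (a v + b _)) v)
        = a v + (b _ + c _)
    rw [TwFun.key, add_assoc]
  one_mul a := by
    funext v
    show (0 : ℤ) + a (((finRotate n).symm ^ (0 : ℤ)) v) = a v
    simp
  mul_one a := by
    funext v
    show a v + (0 : ℤ) = a v
    simp

/-- The automorphism of `ℤ^α` (written multiplicatively) given by permuting
coordinates by `s`. -/
def permMulAut {α : Type*} (s : Equiv.Perm α) : MulAut (Multiplicative (α → ℤ)) where
  toFun z := Multiplicative.ofAdd (Multiplicative.toAdd z ∘ ⇑s.symm)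
  invFun z := Multiplicative.ofAdd (Multiplicative.toAdd z ∘ ⇑s)
  left_inv z := by
    simp [Function.comp_def]
  right_inv z := by
    simp [Function.comp_def]
  map_mul' z₁ z₂ := rfl

/-- The action of the symmetric group on `ℤ^α` by permuting coordinates,
as a homomorphism to the automorphism group. -/
def permHom (α : Type*) : Equiv.Perm α →* MulAut (Multiplicative (α → ℤ)) where
  toFun := permMulAut
  map_one' := by
    ext z
    rfl
  map_mul' s t := by
    ext z
    rfl

namespace TwAux

variable {m : ℕ}

open Fin.CommRing

lemma mul_apply {n : ℕ} (a b : TwFun n) (v : Fin n) :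
    (a * b) v = a v + b (((finRotate n).symm ^ (a v)) v) := rfl

lemma one_apply {n : ℕ} (v : Fin n) : (1 : TwFun n) v = 0 := rfl

lemma tau_apply (v : Fin (m+1)) : (finRotate (m+1)).symm v = v - 1 := by
  rw [Equiv.symm_apply_eq, finRotate_succ_apply]; ring

lemma tau_zpow (k : ℤ) (v : Fin (m+1)) :
    ((finRotate (m+1)).symm ^ k) v = v - (k : Fin (m+1)) := by
  induction k using Int.induction_on with
  | zero => simp
  | succ k ih =>
      rw [show (k:ℤ)+1 = 1+k by ring, zpow_add, zpow_one, Equiv.Perm.mul_apply, ih, tau_apply]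
      push_cast; ring
  | pred k ih =>
      rw [show -(k:ℤ)-1 = -1+-k by ring, zpow_add, Equiv.Perm.mul_apply, ih, zpow_neg_one]
      rw [show ((finRotate (m+1)).symm)⁻¹ = finRotate (m+1) from rfl, finRotate_succ_apply]
      push_cast; ring

lemma tau_zpow_shift (v w : Fin (m+1)) (t : ℤ) :
    ((finRotate (m+1)).symm ^ (((v:ℕ):ℤ) - ((w:ℕ):ℤ) + ((m:ℤ)+1) * t)) v = w := by
  rw [tau_zpow]
  push_cast
  rw [show (((m:ℕ):Fin (m+1)) + 1) = 0 by exact_mod_cast Fin.natCast_self (m+1)]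
  ring

lemma dvd_key (k : ℤ) (v : Fin (m+1)) :
    ((m:ℤ)+1) ∣ (((((finRotate (m+1)).symm ^ k) v :ℕ):ℤ) - ((v:ℕ):ℤ) + k) := by
  have h : ((m:ℤ)+1) = ((m+1 : ℕ) : ℤ) := by push_cast; ring
  rw [h, ← ZMod.intCast_zmod_eq_zero_iff_dvd]
  show (((((((finRotate (m+1)).symm ^ k) v :ℕ):ℤ) - ((v:ℕ):ℤ) + k : ℤ)) : Fin (m+1)) = 0
  push_cast
  rw [tau_zpow]
  ring

/-- The semidirect product group. -/
abbrev G (m : ℕ) :=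
  Multiplicative (Fin (m+1) → ℤ) ⋊[permHom (Fin (m+1))] Equiv.Perm (Fin (m+1))

def psi (m : ℕ) : G m →* TwFun (m+1) where
  toFun p := fun v =>
    ((v:ℕ):ℤ) - (((p.right⁻¹ v : Fin (m+1)):ℕ):ℤ)
      + ((m:ℤ)+1) * (Multiplicative.toAdd p.left v)
  map_one' := by
    funext v
    show ((v:ℕ):ℤ) - _ + _ = (1 : TwFun (m+1)) v
    simp [one_apply]
  map_mul' p q := by
    funext v
    erw [mul_apply]
    have h1 : ((finRotate (m+1)).symm ^
        (((v:ℕ):ℤ) - (((p.right⁻¹ v : Fin (m+1)):ℕ):ℤ)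
          + ((m:ℤ)+1) * (Multiplicative.toAdd p.left v))) v = p.right⁻¹ v :=
      tau_zpow_shift v (p.right⁻¹ v) _
    show ((v:ℕ):ℤ) - ((((p*q).right⁻¹ v : Fin (m+1)):ℕ):ℤ)
          + ((m:ℤ)+1) * (Multiplicative.toAdd (p*q).left v)
        = (((v:ℕ):ℤ) - (((p.right⁻¹ v : Fin (m+1)):ℕ):ℤ)
            + ((m:ℤ)+1) * (Multiplicative.toAdd p.left v))
          + ((((_:Fin (m+1)):ℕ):ℤ) - (((q.right⁻¹ _ : Fin (m+1)):ℕ):ℤ)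
            + ((m:ℤ)+1) * (Multiplicative.toAdd q.left _))
    rw [h1]
    rw [SemidirectProduct.mul_right, SemidirectProduct.mul_left, mul_inv_rev,
      Equiv.Perm.mul_apply]
    show ((v:ℕ):ℤ) - (((q.right⁻¹ (p.right⁻¹ v) : Fin (m+1)):ℕ):ℤ)
          + ((m:ℤ)+1) * ((Multiplicative.toAdd p.left v)
              + (Multiplicative.toAdd q.left (p.right⁻¹ v))) = _
    ring

def psiU (m : ℕ) : G m →* (TwFun (m+1))ˣ :=
  (Units.map (psi m)).comp (toUnits : G m ≃* (G m)ˣ).toMonoidHom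

lemma psiU_val (p : G m) (v : Fin (m+1)) :
    ((psiU m p : (TwFun (m+1))ˣ) : TwFun (m+1)) v
      = ((v:ℕ):ℤ) - (((p.right⁻¹ v : Fin (m+1)):ℕ):ℤ)
          + ((m:ℤ)+1) * (Multiplicative.toAdd p.left v) := rfl

lemma psiU_injective : Function.Injective (psiU m) := by
  rw [injective_iff_map_eq_one]
  intro p hp
  have hv : ∀ v : Fin (m+1),
      ((v:ℕ):ℤ) - (((p.right⁻¹ v : Fin (m+1)):ℕ):ℤ)
        + ((m:ℤ)+1) * (Multiplicative.toAdd p.left v) = 0 := by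
    intro v
    have h : ((psiU m p : (TwFun (m+1))ˣ) : TwFun (m+1)) v
        = ((1 : (TwFun (m+1))ˣ) : TwFun (m+1)) v := by rw [hp]
    rw [psiU_val, Units.val_one, one_apply] at h
    exact h
  have hr : p.right = 1 := by
    rw [← inv_eq_one]
    apply Equiv.ext
    intro v
    have h := hv v
    have hd : ((m:ℤ)+1) ∣ ((((p.right⁻¹ v : Fin (m+1)):ℕ):ℤ) - ((v:ℕ):ℤ)) :=
      ⟨Multiplicative.toAdd p.left v, by linarith⟩
    have h1 : ((p.right⁻¹ v : Fin (m+1)):ℕ) < m + 1 := (p.right⁻¹ v).is_lt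
    have h2 : (v:ℕ) < m + 1 := v.is_lt
    have h0 : (((p.right⁻¹ v : Fin (m+1)):ℕ):ℤ) - ((v:ℕ):ℤ) = 0 := by
      refine Int.eq_zero_of_abs_lt_dvd hd ?_
      rw [abs_lt]
      constructor <;> omega
    have hval : ((p.right⁻¹ v : Fin (m+1)):ℕ) = (v:ℕ) := by omega
    exact Fin.ext hval
  have hl : p.left = 1 := by
    rw [← toAdd_eq_zero]
    funext v
    have h := hv v
    rw [hr] at h
    simp only [inv_one, Equiv.Perm.one_apply] at h
    have hm : ((m:ℤ)+1) ≠ 0 := by positivity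
    have hz : ((m:ℤ)+1) * Multiplicative.toAdd p.left v = 0 := by linarith
    exact (mul_eq_zero.mp hz).resolve_left hm
  rcases p with ⟨l, r⟩
  rw [show (⟨l, r⟩ : G m).left = l from rfl] at hl
  rw [show (⟨l, r⟩ : G m).right = r from rfl] at hr
  rw [hl, hr]
  rfl

lemma psiU_surjective : Function.Surjective (psiU m) := by
  intro u
  set a : TwFun (m+1) := (u : TwFun (m+1)) with ha
  set b : TwFun (m+1) := ((u⁻¹ : (TwFun (m+1))ˣ) : TwFun (m+1)) with hb
  have hab : ∀ v, a v + b (((finRotate (m+1)).symm ^ (a v)) v) = 0 := by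
    intro v
    have h : a * b = 1 := u.mul_inv
    have h2 := congrFun h v
    rw [mul_apply] at h2
    exact h2.trans (one_apply v)
  have hba : ∀ v, b v + a (((finRotate (m+1)).symm ^ (b v)) v) = 0 := by
    intro v
    have h : b * a = 1 := u.inv_mul
    have h2 := congrFun h v
    rw [mul_apply] at h2
    exact h2.trans (one_apply v)
  set σ : Equiv.Perm (Fin (m+1)) :=
    { toFun := fun v => ((finRotate (m+1)).symm ^ (a v)) v
      invFun := fun v => ((finRotate (m+1)).symm ^ (b v)) v
      left_inv := by
        intro v
        show ((finRotate (m+1)).symm ^ (b _)) (((finRotate (m+1)).symm ^ (a v)) v) = v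
        rw [← TwFun.key, hab v, zpow_zero, Equiv.Perm.one_apply]
      right_inv := by
        intro v
        show ((finRotate (m+1)).symm ^ (a _)) (((finRotate (m+1)).symm ^ (b v)) v) = v
        rw [← TwFun.key, hba v, zpow_zero, Equiv.Perm.one_apply] } with hσ
  set z : Fin (m+1) → ℤ :=
    fun v => ((((σ v):ℕ):ℤ) - ((v:ℕ):ℤ) + a v) / ((m:ℤ)+1) with hzdef
  have hz : ∀ v, ((m:ℤ)+1) * z v = (((σ v):ℕ):ℤ) - ((v:ℕ):ℤ) + a v := by
    intro v
    exact Int.mul_ediv_cancel' (dvd_key (a v) v)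
  refine ⟨⟨Multiplicative.ofAdd z, σ⁻¹⟩, ?_⟩
  apply Units.ext
  funext v
  rw [psiU_val]
  show ((v:ℕ):ℤ) - (((σ⁻¹⁻¹ v : Fin (m+1)):ℕ):ℤ)
      + ((m:ℤ)+1) * (Multiplicative.toAdd (Multiplicative.ofAdd z) v) = a v
  rw [inv_inv, toAdd_ofAdd, hz v]
  ring

end TwAux

/-- The group `𝔄ₙ` of invertible elements of the monoid `ℤ^V` (`V = {1, …, n}`)
with the twisted multiplication determined by the cyclic permutation
`τ(k) = k - 1 mod n` is isomorphic to the semidirect product `ℤⁿ ⋊ Sₙ`,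
where `Sₙ` acts on `ℤⁿ` by permuting coordinates. -/
theorem stmt_4 (n : ℕ) (hn : 1 ≤ n) :
    Nonempty ((TwFun n)ˣ ≃*
      Multiplicative (Fin n → ℤ) ⋊[permHom (Fin n)] Equiv.Perm (Fin n)) := by
  obtain ⟨m, rfl⟩ : ∃ m, n = m + 1 := ⟨n - 1, by omega⟩
  exact ⟨(MulEquiv.ofBijective (TwAux.psiU m)
    ⟨TwAux.psiU_injective, TwAux.psiU_surjective⟩).symm⟩
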